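/- In the Successive Rejects allocation, for any round r ∈ [K−1], the total number of samples used up to and including round r, N_r = (K−r)·n_r + Σ_{s=1}^r n_s with n_s = ⌈(1/loḡ(K))·(T−K)/(K+1−s)⌉, satisfies N_r ≤ T. -/

import Mathlib

noncomputable section

/-- `loḡ(K) := 1/2 + Σ_{i=2}^K 1/i`. -/
def logBar (K : ℕ) : ℝ := 1 / 2 + ∑ i ∈ Finset.Icc 2 K, (1 : ℝ) / i

/-- Successive Rejects allocation: `n_s := ⌈(1/loḡ K) · (T - K)/(K + 1 - s)⌉`. -/
def nSR (T K s : ℕ) : ℝ := ⌈(1 / logBar K) * ((T : ℝ) - K) / ((K + 1 - s : ℕ) : ℝ)⌉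

lemma logBar_pos (K : ℕ) : 0 < logBar K := by
  have h : (0:ℝ) ≤ ∑ i ∈ Finset.Icc 2 K, (1 : ℝ) / i :=
    Finset.sum_nonneg (fun i _ => by positivity)
  unfold logBar; linarith

lemma key_ineq (K r : ℕ) (hK : 2 ≤ K) (hr1 : 1 ≤ r) (hr : r ≤ K - 1) :
    ((K - r : ℕ) : ℝ) / ((K + 1 - r : ℕ) : ℝ)
      + ∑ s ∈ Finset.Icc 1 r, (1 : ℝ) / ((K + 1 - s : ℕ) : ℝ) ≤ logBar K := by
  have hrK : r ≤ K - 1 := hr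
  have hrK' : r < K := lt_of_le_of_lt hrK (Nat.sub_lt (by omega) one_pos)
  set a := K - r with ha
  have ha1 : 1 ≤ a := by omega
  have haK : a ≤ K := by omega
  have hK1r : K + 1 - r = a + 1 := by omega
  -- reindex the sum
  have hsum : ∑ s ∈ Finset.Icc 1 r, (1 : ℝ) / ((K + 1 - s : ℕ) : ℝ)
      = ∑ i ∈ Finset.Ioc a K, (1 : ℝ) / (i : ℝ) := by
    refine Finset.sum_nbij' (fun s => K + 1 - s) (fun i => K + 1 - i) ?_ ?_ ?_ ?_ ?_
    · intro s hs
      simp only [Finset.mem_Icc] at hs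
      simp only [Finset.mem_Ioc]
      omega
    · intro i hi
      simp only [Finset.mem_Ioc] at hi
      simp only [Finset.mem_Icc]
      omega
    · intro s hs
      simp only [Finset.mem_Icc] at hs
      show K + 1 - (K + 1 - s) = s
      omega
    · intro i hi
      simp only [Finset.mem_Ioc] at hi
      show K + 1 - (K + 1 - i) = i
      omega
    · intro s _; rfl
  rw [hsum, hK1r]
  -- split logBar
  have hsplit : logBar K = 1/2 + (∑ i ∈ Finset.Ioc 1 a, (1:ℝ)/ i
      + ∑ i ∈ Finset.Ioc a K, (1:ℝ)/ i) := by
    rw [logBar, Finset.sum_Ioc_consecutive _ ha1 haK]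
    have h2 : Finset.Icc 2 K = Finset.Ioc 1 K := by
      rw [← Finset.Icc_add_one_left_eq_Ioc]; rfl
    rw [h2]
  rw [hsplit]
  have hmain : ((a : ℕ) : ℝ) / ((a + 1 : ℕ) : ℝ) ≤ 1/2 + ∑ i ∈ Finset.Ioc 1 a, (1:ℝ)/ i := by
    rcases eq_or_lt_of_le ha1 with h1 | h2
    · rw [← h1]; norm_num
    · have h2' : 2 ≤ a := h2
      have hle1 : ((a : ℕ) : ℝ) / ((a + 1 : ℕ) : ℝ) ≤ 1 := by
        rw [div_le_one (by positivity)]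
        push_cast; linarith
      have hterm : (1:ℝ)/2 ≤ ∑ i ∈ Finset.Ioc 1 a, (1:ℝ)/ i := by
        have h2mem : (2 : ℕ) ∈ Finset.Ioc 1 a := by
          simp only [Finset.mem_Ioc]; omega
        have := Finset.single_le_sum (f := fun i : ℕ => (1:ℝ)/ i)
          (fun i _ => by positivity) h2mem
        simpa using this
      linarith
  linarith

/-- For every round `r ∈ [K-1]`, the total number of samples used by Successive Rejects
up to round `r`, `N_r = (K - r)·n_r + Σ_{s=1}^r n_s`, is at most `T`. -/
theorem SR_total_samples_le (T K : ℕ) (hK : 2 ≤ K) (hT : K ≤ T) :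
    ∀ r ∈ Finset.Icc 1 (K - 1),
      ((K - r : ℕ) : ℝ) * nSR T K r + ∑ s ∈ Finset.Icc 1 r, nSR T K s ≤ (T : ℝ) := by
  intro r hr
  simp only [Finset.mem_Icc] at hr
  obtain ⟨hr1, hrK⟩ := hr
  have hL : 0 < logBar K := logBar_pos K
  set c : ℝ := (1 / logBar K) * ((T : ℝ) - K) with hc
  have hc0 : 0 ≤ c := by
    apply mul_nonneg (by positivity)
    have : (K:ℝ) ≤ T := Nat.cast_le.mpr hT
    linarith
  -- bound each nSR term
  have hbound : ∀ s : ℕ, nSR T K s ≤ c / ((K + 1 - s : ℕ) : ℝ) + 1 := by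
    intro s
    unfold nSR
    have := Int.ceil_lt_add_one (c / ((K + 1 - s : ℕ) : ℝ))
    rw [hc]
    exact le_of_lt (by rw [mul_div_assoc] at this ⊢; exact_mod_cast this)
  have hsum : ∑ s ∈ Finset.Icc 1 r, nSR T K s
      ≤ ∑ s ∈ Finset.Icc 1 r, (c / ((K + 1 - s : ℕ) : ℝ) + 1) :=
    Finset.sum_le_sum (fun s _ => hbound s)
  have hcard : (Finset.Icc 1 r).card = r := by simp
  rw [Finset.sum_add_distrib] at hsum
  simp only [Finset.sum_const, hcard, nsmul_eq_mul, mul_one] at hsum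
  have hKr0 : (0:ℝ) ≤ ((K - r : ℕ) : ℝ) := Nat.cast_nonneg _
  have hprod : ((K - r : ℕ) : ℝ) * nSR T K r
      ≤ ((K - r : ℕ) : ℝ) * (c / ((K + 1 - r : ℕ) : ℝ) + 1) :=
    mul_le_mul_of_nonneg_left (hbound r) hKr0
  have hcast : ((K - r : ℕ) : ℝ) + (r : ℝ) = (K : ℝ) := by
    have : K - r + r = K := by omega
    exact_mod_cast congrArg (Nat.cast : ℕ → ℝ) this
  have hkey := key_ineq K r hK hr1 hrK
  have hckey : c * (((K - r : ℕ) : ℝ) / ((K + 1 - r : ℕ) : ℝ)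
      + ∑ s ∈ Finset.Icc 1 r, (1 : ℝ) / ((K + 1 - s : ℕ) : ℝ)) ≤ c * logBar K :=
    mul_le_mul_of_nonneg_left hkey hc0
  have hcL : c * logBar K = (T : ℝ) - K := by
    rw [hc]; field_simp
  have hrw : c * (((K - r : ℕ) : ℝ) / ((K + 1 - r : ℕ) : ℝ)
      + ∑ s ∈ Finset.Icc 1 r, (1 : ℝ) / ((K + 1 - s : ℕ) : ℝ))
      = ((K - r : ℕ) : ℝ) * (c / ((K + 1 - r : ℕ) : ℝ))
        + ∑ s ∈ Finset.Icc 1 r, c / ((K + 1 - s : ℕ) : ℝ) := by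
    rw [mul_add, Finset.mul_sum]
    congr 1
    · ring
    · exact Finset.sum_congr rfl (fun s _ => by ring)
  rw [hrw, hcL] at hckey
  have hTK : (K:ℝ) ≤ (T:ℝ) := Nat.cast_le.mpr hT
  calc ((K - r : ℕ) : ℝ) * nSR T K r + ∑ s ∈ Finset.Icc 1 r, nSR T K s
      ≤ ((K - r : ℕ) : ℝ) * (c / ((K + 1 - r : ℕ) : ℝ) + 1)
        + (∑ s ∈ Finset.Icc 1 r, c / ((K + 1 - s : ℕ) : ℝ) + (r : ℝ)) := by
        exact add_le_add hprod hsum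
    _ = (((K - r : ℕ) : ℝ) * (c / ((K + 1 - r : ℕ) : ℝ))
        + ∑ s ∈ Finset.Icc 1 r, c / ((K + 1 - s : ℕ) : ℝ))
        + (((K - r : ℕ) : ℝ) + (r : ℝ)) := by ring
    _ ≤ ((T : ℝ) - K) + (K : ℝ) := by rw [hcast]; linarith
    _ = (T : ℝ) := by ring
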